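/- Let a, b, k, Λ, λ be real numbers with a > 0 and b + k² + Λ = 0. Let m₁, m₂, m₃ be real numbers with m_j ≠ k and (m_j² + b + λ²)·(m_j − k) + a² = 0 for j = 1, 2, 3, and set n_j := m_j² − k² − Λ + (2/3)·λ². Define N(x,t) = k·x − Λ·t, P(x,t) = diag(1, exp(−i·N(x,t)), 1), E(x,t) = diag(exp(i·(m₁·x + n₁·t)), exp(i·(m₂·x + n₂·t)), exp(i·(m₃·x + n₃·t))), and let R be the 3×3 matrix whose j-th column is (−1, a/(k − m_j), λ − i·m_j)ᵀ. Then Φ(x,t) := P(x,t)·R·E(x,t) satisfies ∂ₓΦ = U·Φ and ∂ₜΦ = V·Φ, where U and V are the Lax matrices of the Yajima–Oikawa system built from λ and the plane wave pair z(x,t) = a·exp(−i·N(x,t)), m(x,t) = b. -/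

import Mathlib

open Complex Matrix

noncomputable section

/-- Partial derivative in the first (spatial) variable. -/
def pdx (f : ℝ × ℝ → ℂ) (p : ℝ × ℝ) : ℂ := deriv (fun s => f (s, p.2)) p.1

/-- The spatial Lax matrix of the Yajima–Oikawa system. -/
def LaxU (lam : ℂ) (z : ℝ × ℝ → ℂ) (m : ℝ × ℝ → ℝ) (p : ℝ × ℝ) :
    Matrix (Fin 3) (Fin 3) ℂ :=
  !![lam, 0, 1;
     Complex.I * z p, 0, 0;
     (m p : ℂ), (starRingEnd ℂ) (z p), -lam]

/-- The temporal Lax matrix of the Yajima–Oikawa system. -/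
def LaxV (lam : ℂ) (z : ℝ × ℝ → ℂ) (p : ℝ × ℝ) :
    Matrix (Fin 3) (Fin 3) ℂ :=
  !![-(1/3) * Complex.I * lam ^ 2, -Complex.I * (starRingEnd ℂ) (z p), 0;
     lam * z p - pdx z p, (2/3) * Complex.I * lam ^ 2, z p;
     ((‖z p‖) ^ 2 : ℝ),
       Complex.I * (lam * (starRingEnd ℂ) (z p) - pdx (fun q => (starRingEnd ℂ) (z q)) p),
       -(1/3) * Complex.I * lam ^ 2]

private lemma hasDerivAt_cexp_linear (c d : ℂ) (x : ℝ) :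
    HasDerivAt (fun s : ℝ => Complex.exp (c * s + d)) (c * Complex.exp (c * x + d)) x := by
  have h : HasDerivAt (fun w : ℂ => Complex.exp (c * w + d))
      (Complex.exp (c * (x : ℂ) + d) * (c * 1)) (x : ℂ) :=
    (((hasDerivAt_id _).const_mul c).add_const d).cexp
  simpa [mul_comm] using h.comp_ofReal

/-- The matrix `Φ = P·R·E` is a fundamental matrix solution of the Yajima–Oikawa
Lax pair at the plane wave solution. -/
theorem fundamental_matrix_solution (a b k Λ lam : ℝ) (ha : 0 < a)
    (hdisp : b + k ^ 2 + Λ = 0)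
    (ms : Fin 3 → ℝ) (hms : ∀ j, ms j ≠ k)
    (hroot : ∀ j, ((ms j) ^ 2 + b + lam ^ 2) * (ms j - k) + a ^ 2 = 0)
    (ns : Fin 3 → ℝ) (hns : ns = fun j => (ms j) ^ 2 - k ^ 2 - Λ + (2/3) * lam ^ 2)
    (N : ℝ × ℝ → ℝ) (hN : N = fun p => k * p.1 - Λ * p.2)
    (z : ℝ × ℝ → ℂ) (hz : z = fun p => (a : ℂ) * Complex.exp (-Complex.I * (N p : ℂ)))
    (m : ℝ × ℝ → ℝ) (hm : m = fun _ => b)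
    (P : ℝ × ℝ → Matrix (Fin 3) (Fin 3) ℂ)
    (hP : P = fun p => Matrix.diagonal ![1, Complex.exp (-Complex.I * (N p : ℂ)), 1])
    (E : ℝ × ℝ → Matrix (Fin 3) (Fin 3) ℂ)
    (hE : E = fun p => Matrix.diagonal fun j =>
      Complex.exp (Complex.I * ((ms j : ℂ) * p.1 + (ns j : ℂ) * p.2)))
    (R : Matrix (Fin 3) (Fin 3) ℂ)
    (hR : R = Matrix.of fun i j =>
      ![(-1 : ℂ), (a : ℂ) / ((k : ℂ) - (ms j : ℂ)), (lam : ℂ) - Complex.I * (ms j : ℂ)] i)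
    (Φ : ℝ × ℝ → Matrix (Fin 3) (Fin 3) ℂ)
    (hΦ : Φ = fun p => P p * R * E p) :
    ∀ p : ℝ × ℝ, ∀ i j : Fin 3,
      deriv (fun s => Φ (s, p.2) i j) p.1 = (LaxU lam z m p * Φ p) i j ∧
      deriv (fun s => Φ (p.1, s) i j) p.2 = (LaxV lam z p * Φ p) i j := by
  subst hN
  intro p i j
  have hkm : (k : ℂ) - (ms j : ℂ) ≠ 0 := by
    rw [sub_ne_zero]
    intro h
    have hb : (k : ℝ) = ms j := by exact_mod_cast h
    exact hms j hb.symm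
  have hrootC : ((ms j : ℂ) ^ 2 + (b : ℂ) + (lam : ℂ) ^ 2) * ((ms j : ℂ) - k) + (a : ℂ) ^ 2 = 0 := by
    exact_mod_cast hroot j
  have hdispC : (b : ℂ) + (k : ℂ) ^ 2 + (Λ : ℂ) = 0 := by exact_mod_cast hdisp
  have hnsC : (ns j : ℂ) = (ms j : ℂ) ^ 2 - (k : ℂ) ^ 2 - (Λ : ℂ) + (2/3) * (lam : ℂ) ^ 2 := by
    rw [hns]; push_cast; ring
  have hca : ((a : ℂ) / ((k : ℂ) - (ms j : ℂ))) * ((k : ℂ) - (ms j : ℂ)) = (a : ℂ) :=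
    div_mul_cancel₀ _ hkm
  have haD : (a : ℂ) * ((a : ℂ) / ((k : ℂ) - (ms j : ℂ)))
      = (ms j : ℂ) ^ 2 + (b : ℂ) + (lam : ℂ) ^ 2 := by
    rw [mul_div_assoc', div_eq_iff hkm]
    linear_combination hrootC
  have e0 : ∀ q : ℝ × ℝ, Φ q 0 j
      = -Complex.exp (Complex.I * ((ms j : ℂ) * q.1 + (ns j : ℂ) * q.2)) := by
    intro q; simp [hΦ, hP, hE, hR, Matrix.diagonal_mul, Matrix.mul_diagonal]
  have e1 : ∀ q : ℝ × ℝ, Φ q 1 j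
      = Complex.exp (-Complex.I * ((k : ℂ) * q.1 - (Λ : ℂ) * q.2)) * ((a : ℂ) / ((k : ℂ) - (ms j : ℂ)))
        * Complex.exp (Complex.I * ((ms j : ℂ) * q.1 + (ns j : ℂ) * q.2)) := by
    intro q; simp [hΦ, hP, hE, hR, Matrix.diagonal_mul, Matrix.mul_diagonal]
  have e2 : ∀ q : ℝ × ℝ, Φ q 2 j
      = ((lam : ℂ) - Complex.I * (ms j : ℂ))
        * Complex.exp (Complex.I * ((ms j : ℂ) * q.1 + (ns j : ℂ) * q.2)) := by
    intro q; simp [hΦ, hP, hE, hR, Matrix.diagonal_mul, Matrix.mul_diagonal]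
  have hEx : HasDerivAt (fun s : ℝ => Complex.exp (Complex.I * ((ms j : ℂ) * s + (ns j : ℂ) * p.2)))
      (Complex.I * (ms j : ℂ)
        * Complex.exp (Complex.I * ((ms j : ℂ) * p.1 + (ns j : ℂ) * p.2))) p.1 := by
    have h := hasDerivAt_cexp_linear (Complex.I * (ms j : ℂ)) (Complex.I * ((ns j : ℂ) * p.2)) p.1
    have e : ∀ s : ℝ, Complex.I * (ms j : ℂ) * (s : ℂ) + Complex.I * ((ns j : ℂ) * p.2)
        = Complex.I * ((ms j : ℂ) * s + (ns j : ℂ) * p.2) := fun s => by ring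
    simpa only [e] using h
  have hEt : HasDerivAt (fun s : ℝ => Complex.exp (Complex.I * ((ms j : ℂ) * p.1 + (ns j : ℂ) * s)))
      (Complex.I * (ns j : ℂ)
        * Complex.exp (Complex.I * ((ms j : ℂ) * p.1 + (ns j : ℂ) * p.2))) p.2 := by
    have h := hasDerivAt_cexp_linear (Complex.I * (ns j : ℂ)) (Complex.I * ((ms j : ℂ) * p.1)) p.2
    have e : ∀ s : ℝ, Complex.I * (ns j : ℂ) * (s : ℂ) + Complex.I * ((ms j : ℂ) * p.1)
        = Complex.I * ((ms j : ℂ) * p.1 + (ns j : ℂ) * s) := fun s => by ring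
    simpa only [e] using h
  have hYx : HasDerivAt (fun s : ℝ => Complex.exp (-Complex.I * ((k : ℂ) * s - (Λ : ℂ) * p.2)))
      (-Complex.I * (k : ℂ)
        * Complex.exp (-Complex.I * ((k : ℂ) * p.1 - (Λ : ℂ) * p.2))) p.1 := by
    have h := hasDerivAt_cexp_linear (-Complex.I * (k : ℂ)) (Complex.I * ((Λ : ℂ) * p.2)) p.1
    have e : ∀ s : ℝ, -Complex.I * (k : ℂ) * (s : ℂ) + Complex.I * ((Λ : ℂ) * p.2)
        = -Complex.I * ((k : ℂ) * s - (Λ : ℂ) * p.2) := fun s => by ring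
    simpa only [e] using h
  have hYt : HasDerivAt (fun s : ℝ => Complex.exp (-Complex.I * ((k : ℂ) * p.1 - (Λ : ℂ) * s)))
      (Complex.I * (Λ : ℂ)
        * Complex.exp (-Complex.I * ((k : ℂ) * p.1 - (Λ : ℂ) * p.2))) p.2 := by
    have h := hasDerivAt_cexp_linear (Complex.I * (Λ : ℂ)) (-Complex.I * ((k : ℂ) * p.1)) p.2
    have e : ∀ s : ℝ, Complex.I * (Λ : ℂ) * (s : ℂ) + -Complex.I * ((k : ℂ) * p.1)
        = -Complex.I * ((k : ℂ) * p.1 - (Λ : ℂ) * s) := fun s => by ring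
    simpa only [e] using h
  have hBx : HasDerivAt (fun s : ℝ => Complex.exp (Complex.I * ((k : ℂ) * s - (Λ : ℂ) * p.2)))
      (Complex.I * (k : ℂ)
        * Complex.exp (Complex.I * ((k : ℂ) * p.1 - (Λ : ℂ) * p.2))) p.1 := by
    have h := hasDerivAt_cexp_linear (Complex.I * (k : ℂ)) (-Complex.I * ((Λ : ℂ) * p.2)) p.1
    have e : ∀ s : ℝ, Complex.I * (k : ℂ) * (s : ℂ) + -Complex.I * ((Λ : ℂ) * p.2)
        = Complex.I * ((k : ℂ) * s - (Λ : ℂ) * p.2) := fun s => by ring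
    simpa only [e] using h
  have hzp : z p = (a : ℂ) * Complex.exp (-Complex.I * ((k : ℂ) * p.1 - (Λ : ℂ) * p.2)) := by
    rw [hz]; push_cast; ring_nf
  have hconj : (starRingEnd ℂ) (z p)
      = (a : ℂ) * Complex.exp (Complex.I * ((k : ℂ) * p.1 - (Λ : ℂ) * p.2)) := by
    rw [hz]
    simp only [_root_.map_mul, Complex.conj_ofReal, ← Complex.exp_conj, map_neg, Complex.conj_I, neg_neg]
    push_cast; ring_nf
  have habs : ((‖z p‖ ^ 2 : ℝ) : ℂ) = (a : ℂ) ^ 2 := by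
    rw [hz]
    simp [Complex.norm_exp, abs_of_pos ha]
  have hYY : Complex.exp (Complex.I * ((k : ℂ) * p.1 - (Λ : ℂ) * p.2))
      * Complex.exp (-(Complex.I * ((k : ℂ) * p.1 - (Λ : ℂ) * p.2))) = 1 := by
    rw [← Complex.exp_add]
    ring_nf
    exact Complex.exp_zero
  have hpz : pdx z p = -Complex.I * (k : ℂ)
      * ((a : ℂ) * Complex.exp (-Complex.I * ((k : ℂ) * p.1 - (Λ : ℂ) * p.2))) := by
    have hfun : (fun s : ℝ => z (s, p.2))
        = fun s : ℝ => (a : ℂ) * Complex.exp (-Complex.I * ((k : ℂ) * s - (Λ : ℂ) * p.2)) := by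
      funext s; rw [hz]; push_cast; ring_nf
    rw [pdx, hfun, (hYx.const_mul (a : ℂ)).deriv]
    ring
  have hpzc : pdx (fun q => (starRingEnd ℂ) (z q)) p = Complex.I * (k : ℂ)
      * ((a : ℂ) * Complex.exp (Complex.I * ((k : ℂ) * p.1 - (Λ : ℂ) * p.2))) := by
    have hfun : (fun s : ℝ => (starRingEnd ℂ) (z (s, p.2)))
        = fun s : ℝ => (a : ℂ) * Complex.exp (Complex.I * ((k : ℂ) * s - (Λ : ℂ) * p.2)) := by
      funext s; rw [hz]
      simp only [_root_.map_mul, Complex.conj_ofReal, ← Complex.exp_conj, map_neg, Complex.conj_I, neg_neg]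
      push_cast; ring_nf
    rw [pdx, hfun, (hBx.const_mul (a : ℂ)).deriv]
    ring
  fin_cases i
  · constructor
    · show deriv (fun s => Φ (s, p.2) 0 j) p.1 = (LaxU lam z m p * Φ p) 0 j
      have hfun : (fun s : ℝ => Φ (s, p.2) 0 j)
          = fun s : ℝ => -Complex.exp (Complex.I * ((ms j : ℂ) * s + (ns j : ℂ) * p.2)) := by
        funext s; exact e0 (s, p.2)
      rw [hfun, hEx.fun_neg.deriv]
      simp only [LaxU, hconj]
      simp [Matrix.mul_apply, Fin.sum_univ_three, e0, e1, e2, hm, hzp]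
      ring
    · show deriv (fun s => Φ (p.1, s) 0 j) p.2 = (LaxV lam z p * Φ p) 0 j
      have hfun : (fun s : ℝ => Φ (p.1, s) 0 j)
          = fun s : ℝ => -Complex.exp (Complex.I * ((ms j : ℂ) * p.1 + (ns j : ℂ) * s)) := by
        funext s; exact e0 (p.1, s)
      rw [hfun, hEt.fun_neg.deriv]
      simp only [LaxV, hconj, habs, hpz, hpzc]
      simp [Matrix.mul_apply, Fin.sum_univ_three, e0, e1, e2, hzp]
      linear_combination (Complex.I * (a:ℂ) * ((a : ℂ) / ((k : ℂ) - (ms j : ℂ))) * Complex.exp (Complex.I * ((ms j : ℂ) * p.1 + (ns j : ℂ) * p.2))) * hYY + (Complex.I * Complex.exp (Complex.I * ((ms j : ℂ) * p.1 + (ns j : ℂ) * p.2))) * haD - (Complex.I * Complex.exp (Complex.I * ((ms j : ℂ) * p.1 + (ns j : ℂ) * p.2))) * hnsC + (Complex.I * Complex.exp (Complex.I * ((ms j : ℂ) * p.1 + (ns j : ℂ) * p.2))) * hdispC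
  · constructor
    · show deriv (fun s => Φ (s, p.2) 1 j) p.1 = (LaxU lam z m p * Φ p) 1 j
      have hfun : (fun s : ℝ => Φ (s, p.2) 1 j)
          = fun s : ℝ => Complex.exp (-Complex.I * ((k : ℂ) * s - (Λ : ℂ) * p.2))
            * ((a : ℂ) / ((k : ℂ) - (ms j : ℂ)))
            * Complex.exp (Complex.I * ((ms j : ℂ) * s + (ns j : ℂ) * p.2)) := by
        funext s; exact e1 (s, p.2)
      rw [hfun, ((hYx.mul_const ((a : ℂ) / ((k : ℂ) - (ms j : ℂ)))).fun_mul hEx).deriv]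
      simp only [LaxU, hconj]
      simp [Matrix.mul_apply, Fin.sum_univ_three, e0, e1, e2, hm, hzp]
      linear_combination (-(Complex.I) * Complex.exp (-(Complex.I * ((k : ℂ) * p.1 - (Λ : ℂ) * p.2))) * Complex.exp (Complex.I * ((ms j : ℂ) * p.1 + (ns j : ℂ) * p.2))) * hca
    · show deriv (fun s => Φ (p.1, s) 1 j) p.2 = (LaxV lam z p * Φ p) 1 j
      have hfun : (fun s : ℝ => Φ (p.1, s) 1 j)
          = fun s : ℝ => Complex.exp (-Complex.I * ((k : ℂ) * p.1 - (Λ : ℂ) * s))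
            * ((a : ℂ) / ((k : ℂ) - (ms j : ℂ)))
            * Complex.exp (Complex.I * ((ms j : ℂ) * p.1 + (ns j : ℂ) * s)) := by
        funext s; exact e1 (p.1, s)
      rw [hfun, ((hYt.mul_const ((a : ℂ) / ((k : ℂ) - (ms j : ℂ)))).fun_mul hEt).deriv]
      simp only [LaxV, hconj, habs, hpz, hpzc]
      simp [Matrix.mul_apply, Fin.sum_univ_three, e0, e1, e2, hzp]
      linear_combination (Complex.I * Complex.exp (-(Complex.I * ((k : ℂ) * p.1 - (Λ : ℂ) * p.2))) * Complex.exp (Complex.I * ((ms j : ℂ) * p.1 + (ns j : ℂ) * p.2)) * ((a : ℂ) / ((k : ℂ) - (ms j : ℂ)))) * hnsC - (Complex.I * Complex.exp (-(Complex.I * ((k : ℂ) * p.1 - (Λ : ℂ) * p.2))) * Complex.exp (Complex.I * ((ms j : ℂ) * p.1 + (ns j : ℂ) * p.2)) * ((k:ℂ) + (ms j:ℂ))) * hca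
  · constructor
    · show deriv (fun s => Φ (s, p.2) 2 j) p.1 = (LaxU lam z m p * Φ p) 2 j
      have hfun : (fun s : ℝ => Φ (s, p.2) 2 j)
          = fun s : ℝ => ((lam : ℂ) - Complex.I * (ms j : ℂ))
            * Complex.exp (Complex.I * ((ms j : ℂ) * s + (ns j : ℂ) * p.2)) := by
        funext s; exact e2 (s, p.2)
      rw [hfun, (hEx.const_mul ((lam : ℂ) - Complex.I * (ms j : ℂ))).deriv]
      simp only [LaxU, hconj]
      simp [Matrix.mul_apply, Fin.sum_univ_three, e0, e1, e2, hm, hzp]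
      linear_combination (-((a:ℂ) * ((a : ℂ) / ((k : ℂ) - (ms j : ℂ))) * Complex.exp (Complex.I * ((ms j : ℂ) * p.1 + (ns j : ℂ) * p.2)))) * hYY - Complex.exp (Complex.I * ((ms j : ℂ) * p.1 + (ns j : ℂ) * p.2)) * haD - ((ms j:ℂ)^2 * Complex.exp (Complex.I * ((ms j : ℂ) * p.1 + (ns j : ℂ) * p.2))) * Complex.I_sq
    · show deriv (fun s => Φ (p.1, s) 2 j) p.2 = (LaxV lam z p * Φ p) 2 j
      have hfun : (fun s : ℝ => Φ (p.1, s) 2 j)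
          = fun s : ℝ => ((lam : ℂ) - Complex.I * (ms j : ℂ))
            * Complex.exp (Complex.I * ((ms j : ℂ) * p.1 + (ns j : ℂ) * s)) := by
        funext s; exact e2 (p.1, s)
      rw [hfun, (hEt.const_mul ((lam : ℂ) - Complex.I * (ms j : ℂ))).deriv]
      simp only [LaxV, hconj, habs, hpz, hpzc]
      simp [Matrix.mul_apply, Fin.sum_univ_three, e0, e1, e2, hzp]
      linear_combination ((-(Complex.I * (lam:ℂ) * (a:ℂ) * ((a : ℂ) / ((k : ℂ) - (ms j : ℂ)))) + Complex.I^2 * (k:ℂ) * (a:ℂ) * ((a : ℂ) / ((k : ℂ) - (ms j : ℂ)))) * Complex.exp (Complex.I * ((ms j : ℂ) * p.1 + (ns j : ℂ) * p.2))) * hYY + ((-(Complex.I * (lam:ℂ)) + Complex.I^2 * (k:ℂ)) * Complex.exp (Complex.I * ((ms j : ℂ) * p.1 + (ns j : ℂ) * p.2))) * haD + ((-((ns j:ℂ) * (ms j:ℂ)) - (1/3) * (lam:ℂ)^2 * (ms j:ℂ) + (k:ℂ) * ((ms j:ℂ)^2 + (b:ℂ) + (lam:ℂ)^2)) * Complex.exp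 (Complex.I * ((ms j : ℂ) * p.1 + (ns j : ℂ) * p.2))) * Complex.I_sq + ((Complex.I * (lam:ℂ) + (ms j:ℂ)) * Complex.exp (Complex.I * ((ms j : ℂ) * p.1 + (ns j : ℂ) * p.2))) * hnsC + ((-(Complex.I * (lam:ℂ)) - (ms j:ℂ)) * Complex.exp (Complex.I * ((ms j : ℂ) * p.1 + (ns j : ℂ) * p.2))) * hdispC + Complex.exp (Complex.I * ((ms j : ℂ) * p.1 + (ns j : ℂ) * p.2)) * hrootC


end
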